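/- Let β > 0 and N ≥ 1. For N_g > N define S(N, β, N_g) = 1 − ∑_{n=0}^N C(n+N−1, n)·(1/(1+β))^N·(β/(1+β))^n·(1 − β^{N−n+1})/(1 − β^{N_g+1}) when β ≠ 1, and S(N, 1, N_g) = 1 − ∑_{n=0}^N (1/2)^{N+n}·C(n+N−1, n)·(N−n+1)/(N_g+1) when β = 1. Then S(N, β, N_g) is monotonically increasing in N_g: for all N < N_g ≤ N_g', S(N, β, N_g) ≤ S(N, β, N_g'). -/
import Mathlib


/-- The probability of a successful alternative history attack with relative mining
rate β, N confirmations, and give-up threshold N_g. -/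
noncomputable def attackProb (β : ℝ) (N Ng : ℕ) : ℝ :=
  if β = 1 then
    1 - ∑ n ∈ Finset.range (N + 1),
      (1 / 2 : ℝ) ^ (N + n) * ((n + N - 1).choose n : ℝ)
        * ((N : ℝ) - (n : ℝ) + 1) / ((Ng : ℝ) + 1)
  else
    1 - ∑ n ∈ Finset.range (N + 1),
      ((n + N - 1).choose n : ℝ) * (1 / (1 + β)) ^ N * (β / (1 + β)) ^ n
        * (1 - β ^ (N - n + 1)) / (1 - β ^ (Ng + 1))

/-- For β > 0 and N ≥ 1, the success probability S(N, β, N_g) is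
monotonically increasing in the give-up threshold N_g: for N < N_g ≤ N_g',
S(N, β, N_g) ≤ S(N, β, N_g'). -/
theorem stmt_9 (β : ℝ) (hβ : 0 < β) (N : ℕ) (hN : 1 ≤ N) :
    ∀ Ng Ng' : ℕ, N < Ng → Ng ≤ Ng' → attackProb β N Ng ≤ attackProb β N Ng' := by
  intro Ng Ng' hNg hle
  unfold attackProb
  by_cases hβ1 : β = 1
  · subst hβ1
    simp only [if_pos rfl]
    apply sub_le_sub_left
    apply Finset.sum_le_sum
    intro n hn
    have hn' : n ≤ N := Nat.lt_succ_iff.mp (Finset.mem_range.mp hn)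
    have hnn : (n : ℝ) ≤ N := by exact_mod_cast hn'
    have h1 : (0:ℝ) ≤ (1/2:ℝ)^(N+n) * ((n+N-1).choose n : ℝ) * ((N:ℝ) - n + 1) := by
      apply mul_nonneg (mul_nonneg (by positivity) (by positivity))
      linarith
    have h2 : (0:ℝ) < (Ng : ℝ) + 1 := by positivity
    have h3 : (Ng : ℝ) + 1 ≤ (Ng' : ℝ) + 1 := by
      have : (Ng : ℝ) ≤ Ng' := by exact_mod_cast hle
      linarith
    exact div_le_div_of_nonneg_left h1 h2 h3
  · simp only [if_neg hβ1]
    apply sub_le_sub_left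
    apply Finset.sum_le_sum
    intro n hn
    rcases lt_or_gt_of_ne hβ1 with hlt | hgt
    · -- β < 1
      have hx : (0:ℝ) ≤ ((n+N-1).choose n : ℝ) * (1/(1+β))^N * (β/(1+β))^n
          * (1 - β ^ (N - n + 1)) := by
        apply mul_nonneg (mul_nonneg (mul_nonneg (by positivity) (by positivity))
          (by positivity))
        have := pow_le_one₀ hβ.le hlt.le (n := N - n + 1)
        linarith
      have hd : (0:ℝ) < 1 - β ^ (Ng + 1) := by
        have := pow_lt_one₀ hβ.le hlt (n := Ng + 1) (by omega)
        linarith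
      have hdd : 1 - β ^ (Ng + 1) ≤ 1 - β ^ (Ng' + 1) := by
        have := pow_le_pow_of_le_one hβ.le hlt.le (Nat.add_le_add_right hle 1)
        linarith
      exact div_le_div_of_nonneg_left hx hd hdd
    · -- β > 1
      have hx : ((n+N-1).choose n : ℝ) * (1/(1+β))^N * (β/(1+β))^n
          * (1 - β ^ (N - n + 1)) ≤ 0 := by
        apply mul_nonpos_of_nonneg_of_nonpos
        · positivity
        · have := one_le_pow₀ hgt.le (n := N - n + 1)
          linarith
      have hd : (0:ℝ) < -(1 - β ^ (Ng + 1)) := by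
        have := one_lt_pow₀ hgt (n := Ng + 1) (by omega)
        linarith
      have hdd : -(1 - β ^ (Ng + 1)) ≤ -(1 - β ^ (Ng' + 1)) := by
        have := pow_le_pow_right₀ hgt.le (Nat.add_le_add_right hle 1)
        linarith
      have := div_le_div_of_nonneg_left (neg_nonneg.mpr hx) hd hdd
      rwa [neg_div_neg_eq, neg_div_neg_eq] at this
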